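/- arXiv:1611.06401 — 5 statements merged into one kernel-verified Lean document; each statement's English description precedes it below -/
import Mathlib

section
/- Let 0 < k < n, S = {2n−k, ..., 2n−1}, and T ⊆ S with |T| = i. Define U_T = {v ∈ V(O_n) : v ∩ S = T} and W_T = {w ∈ V(O_n) : w ∩ S = S − T}. Then in O_n(S), every vertex of W_T has degree n−i, every vertex of U_T has degree n−k+i, no two vertices of U_T are adjacent, no two vertices of W_T are adjacent, and every neighbor in O_n(S) of a vertex of W_T lies in U_T. Hence U_T ∪ W_T induces an (n−i, n−k+i)-biregular subgraph of O_n(S). -/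
open Finset

/-- The Kneser graph: vertices are the `k`-element subsets of `[n]`,
adjacent iff disjoint. -/
def kneser (n k : ℕ) : SimpleGraph {s : Finset (Fin n) // s.card = k} where
  Adj u v := u ≠ v ∧ Disjoint (u : Finset (Fin n)) (v : Finset (Fin n))
  symm := by
    constructor
    intro u v h
    exact ⟨Ne.symm h.1, h.2.symm⟩
  loopless := by
    constructor
    intro u h
    exact h.1 rfl

instance kneserDec (n k : ℕ) : DecidableRel (kneser n k).Adj :=
  fun u v => inferInstanceAs (Decidable (u ≠ v ∧ Disjoint (u : Finset (Fin n)) (v : Finset (Fin n))))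

/-- The bipartite Kneser graph: vertices are the `k` and `(n-k)`-element subsets of `[n]`,
adjacent iff one is a proper subset of the other. -/
def bipKneser (n k : ℕ) : SimpleGraph {s : Finset (Fin n) // s.card = k ∨ s.card = n - k} where
  Adj u v := (u : Finset (Fin n)) ⊂ (v : Finset (Fin n)) ∨ (v : Finset (Fin n)) ⊂ (u : Finset (Fin n))
  symm := by
    constructor
    intro u v h
    exact h.symm
  loopless := by
    constructor
    intro u h
    cases h with
    | inl h => exact ssubset_irrefl _ h
    | inr h => exact ssubset_irrefl _ h

instance bipKneserDec (n k : ℕ) : DecidableRel (bipKneser n k).Adj :=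
  fun u v => inferInstanceAs (Decidable (_ ∨ _))

/-- The middle levels graph `B_n` is the bipartite Kneser graph `B_{2n-1, n-1}`. -/
def middleLevels (n : ℕ) := bipKneser (2 * n - 1) (n - 1)

/-- The odd graph `O_n` is the Kneser graph `K_{2n-1, n-1}`. -/
def oddGraph (n : ℕ) := kneser (2 * n - 1) (n - 1)

instance oddGraphDec (n : ℕ) : DecidableRel (oddGraph n).Adj := kneserDec _ _

/-- `O_n(S)`: the odd graph with every edge whose label lies in `S` deleted.  The label of an
edge `(u,v)` is the unique element of `[2n−1] − (u ∪ v)`, so an edge survives iff the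
complement of `u ∪ v` is disjoint from `S`. -/
def oddGraphDel (n : ℕ) (S : Finset (Fin (2 * n - 1))) :
    SimpleGraph {s : Finset (Fin (2 * n - 1)) // s.card = n - 1} where
  Adj u v := (oddGraph n).Adj u v ∧
    Disjoint ((u : Finset (Fin (2 * n - 1))) ∪ (v : Finset (Fin (2 * n - 1))))ᶜ S
  symm := by
    constructor
    intro u v h
    refine ⟨h.1.symm, ?_⟩
    rw [Finset.union_comm]
    exact h.2
  loopless := by
    constructor
    intro u h
    exact (oddGraph n).loopless.irrefl u h.1

instance oddGraphDelDec (n : ℕ) (S : Finset (Fin (2 * n - 1))) :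
    DecidableRel (oddGraphDel n S).Adj :=
  fun u v => inferInstanceAs (Decidable ((oddGraph n).Adj u v ∧ _))

/-- The set `S = {2n−k, ..., 2n−1}` of the last `k` colors (as elements of `Fin (2n−1)`,
which we index from 0, these are the elements with value at least `2n−1−k`). -/
def lastColors (n k : ℕ) : Finset (Fin (2 * n - 1)) :=
  Finset.univ.filter (fun x => 2 * n - 1 - k ≤ x.val)

/-- Let `0 < k < n`, `S = {2n−k,...,2n−1}` and `T ⊆ S` with `|T| = i`.
With `U_T = {v : v ∩ S = T}` and `W_T = {w : w ∩ S = S − T}`, in `O_n(S)` every vertex of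
`W_T` has degree `n−i`, every vertex of `U_T` has degree `n−k+i`, no two vertices of `U_T`
are adjacent, no two vertices of `W_T` are adjacent, and every neighbour of a vertex of
`W_T` lies in `U_T`; hence `U_T ∪ W_T` induces an `(n−i, n−k+i)`-biregular subgraph. -/
theorem biregular_components (n k i : ℕ) (hk : 0 < k) (hkn : k < n)
    (T : Finset (Fin (2 * n - 1))) (hTS : T ⊆ lastColors n k) (hTi : T.card = i) :
    (∀ w : {s : Finset (Fin (2 * n - 1)) // s.card = n - 1},
      (w : Finset (Fin (2 * n - 1))) ∩ lastColors n k = lastColors n k \ T →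
      (oddGraphDel n (lastColors n k)).degree w = n - i) ∧
    (∀ u : {s : Finset (Fin (2 * n - 1)) // s.card = n - 1},
      (u : Finset (Fin (2 * n - 1))) ∩ lastColors n k = T →
      (oddGraphDel n (lastColors n k)).degree u = n - k + i) ∧
    (∀ u v : {s : Finset (Fin (2 * n - 1)) // s.card = n - 1},
      (u : Finset (Fin (2 * n - 1))) ∩ lastColors n k = T →
      (v : Finset (Fin (2 * n - 1))) ∩ lastColors n k = T →
      ¬ (oddGraphDel n (lastColors n k)).Adj u v) ∧
    (∀ w x : {s : Finset (Fin (2 * n - 1)) // s.card = n - 1},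
      (w : Finset (Fin (2 * n - 1))) ∩ lastColors n k = lastColors n k \ T →
      (x : Finset (Fin (2 * n - 1))) ∩ lastColors n k = lastColors n k \ T →
      ¬ (oddGraphDel n (lastColors n k)).Adj w x) ∧
    (∀ w u : {s : Finset (Fin (2 * n - 1)) // s.card = n - 1},
      (w : Finset (Fin (2 * n - 1))) ∩ lastColors n k = lastColors n k \ T →
      (oddGraphDel n (lastColors n k)).Adj w u →
      (u : Finset (Fin (2 * n - 1))) ∩ lastColors n k = T) := by
    classical
  set S := lastColors n k with hS
  have hn2 : 2 ≤ n := by omega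
  have hcard : Fintype.card (Fin (2 * n - 1)) = 2 * n - 1 := Fintype.card_fin _
  have hScard : S.card = k := by
    have h1 : 2 * n - 1 - k < 2 * n - 1 := by omega
    have : S = Finset.Ici (⟨2 * n - 1 - k, h1⟩ : Fin (2 * n - 1)) := by
      ext x
      simp [hS, lastColors, Finset.mem_Ici, Fin.le_def]
    rw [this, Fin.card_Ici, Fin.val_mk]
    omega
  have hik : i ≤ k := by
    rw [← hTi, ← hScard]; exact Finset.card_le_card hTS
  -- adjacency characterization
  have adj_iff : ∀ v u : {s : Finset (Fin (2 * n - 1)) // s.card = n - 1},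
      (oddGraphDel n S).Adj v u ↔
        ((u : Finset (Fin (2 * n - 1))) ⊆ (v : Finset (Fin (2 * n - 1)))ᶜ ∧
          S \ (v : Finset (Fin (2 * n - 1))) ⊆ (u : Finset (Fin (2 * n - 1)))) := by
    intro v u
    constructor
    · rintro ⟨⟨hne, hdisj⟩, hcompl⟩
      refine ⟨le_compl_iff_disjoint_left.mpr hdisj, ?_⟩
      have : S ⊆ (v : Finset (Fin (2 * n - 1))) ∪ u := by
        exact disjoint_compl_left_iff.mp hcompl
      exact sdiff_le_iff.mpr this
    · rintro ⟨h1, h2⟩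
      have hdisj : Disjoint (v : Finset (Fin (2 * n - 1))) u :=
        le_compl_iff_disjoint_left.mp h1
      have hne : v ≠ u := by
        intro h
        subst h
        have hv0 : (v : Finset (Fin (2 * n - 1))) = ∅ := disjoint_self.mp hdisj
        have hv2 : (v : Finset (Fin (2 * n - 1))).card = n - 1 := v.2
        rw [hv0, Finset.card_empty] at hv2
        omega
      exact ⟨⟨hne, hdisj⟩, disjoint_compl_left_iff.mpr (sdiff_le_iff.mp h2)⟩
  -- degree formula
  have degree_eq : ∀ v : {s : Finset (Fin (2 * n - 1)) // s.card = n - 1},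
      (oddGraphDel n S).degree v = n - (S \ (v : Finset (Fin (2 * n - 1)))).card := by
    intro v
    set A := (v : Finset (Fin (2 * n - 1)))ᶜ with hA
    set R := S \ (v : Finset (Fin (2 * n - 1))) with hR
    have hRA : R ⊆ A := by
      intro x hx
      rw [hR, Finset.mem_sdiff] at hx
      rw [hA, Finset.mem_compl]
      exact hx.2
    have hAcard : A.card = n := by
      rw [hA, Finset.card_compl, hcard, v.2]; omega
    have key : ((A \ R).card = ((oddGraphDel n S).neighborFinset v).card) := by
      refine Finset.card_bij (fun a ha => ⟨A.erase a, ?_⟩) ?_ ?_ ?_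
      · rw [Finset.card_erase_of_mem (Finset.mem_sdiff.mp ha).1, hAcard]
      · intro a ha
        rw [SimpleGraph.mem_neighborFinset, adj_iff]
        constructor
        · exact (Finset.erase_subset a A).trans (by rw [hA])
        · intro x hx
          rw [Finset.mem_erase]
          refine ⟨?_, hRA hx⟩
          rintro rfl
          exact (Finset.mem_sdiff.mp ha).2 hx
      · intro a ha b hb h
        have : A.erase a = A.erase b := congrArg Subtype.val h
        exact (Finset.erase_inj A (Finset.mem_sdiff.mp ha).1).mp this
      · intro u hu
        rw [SimpleGraph.mem_neighborFinset, adj_iff] at hu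
        have husub : (u : Finset (Fin (2 * n - 1))) ⊆ A := hu.1
        have hcard1 : (A \ (u : Finset (Fin (2 * n - 1)))).card = 1 := by
          rw [Finset.card_sdiff_of_subset husub, hAcard, u.2]; omega
        obtain ⟨a, ha⟩ := Finset.card_eq_one.mp hcard1
        have haA : a ∈ A := by
          have : a ∈ A \ (u : Finset (Fin (2 * n - 1))) := by rw [ha]; exact Finset.mem_singleton_self a
          exact (Finset.mem_sdiff.mp this).1
        have hau : a ∉ (u : Finset (Fin (2 * n - 1))) := by
          have : a ∈ A \ (u : Finset (Fin (2 * n - 1))) := by rw [ha]; exact Finset.mem_singleton_self a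
          exact (Finset.mem_sdiff.mp this).2
        refine ⟨a, Finset.mem_sdiff.mpr ⟨haA, fun haR => hau (hu.2 haR)⟩, ?_⟩
        apply Subtype.ext
        show A.erase a = (u : Finset (Fin (2 * n - 1)))
        rw [Finset.erase_eq, ← ha, Finset.sdiff_sdiff_self_left,
          Finset.inter_eq_right.mpr husub]
    rw [SimpleGraph.degree, ← key, Finset.card_sdiff_of_subset hRA, hAcard]
  refine ⟨?_, ?_, ?_, ?_, ?_⟩
  · -- degree of W vertices
    intro w hw
    rw [degree_eq w]
    have : S \ (w : Finset (Fin (2 * n - 1))) = T := by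
      have h1 : S \ (w : Finset (Fin (2 * n - 1))) = S \ ((w : Finset (Fin (2 * n - 1))) ∩ S) := by
        ext x; simp only [Finset.mem_sdiff, Finset.mem_inter]; tauto
      rw [h1, hw, Finset.sdiff_sdiff_self_left, Finset.inter_eq_right.mpr hTS]
    rw [this, hTi]
  · -- degree of U vertices
    intro u hu
    rw [degree_eq u]
    have : S \ (u : Finset (Fin (2 * n - 1))) = S \ T := by
      have h1 : S \ (u : Finset (Fin (2 * n - 1))) = S \ ((u : Finset (Fin (2 * n - 1))) ∩ S) := by
        ext x; simp only [Finset.mem_sdiff, Finset.mem_inter]; tauto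
      rw [h1, hu]
    rw [this, Finset.card_sdiff_of_subset hTS, hScard, hTi]
    omega
  · -- U vertices not adjacent
    rintro u v hu hv ⟨⟨hne, hdisj⟩, hcompl⟩
    have hsub : S ⊆ (u : Finset (Fin (2 * n - 1))) ∪ v := by
      exact disjoint_compl_left_iff.mp hcompl
    have hSne : S.Nonempty := by rw [← Finset.card_pos, hScard]; exact hk
    obtain ⟨x, hx⟩ := hSne
    have hxu : x ∈ T → x ∈ (u : Finset (Fin (2 * n - 1))) := fun h => by
      rw [← hu] at h; exact (Finset.mem_inter.mp h).1
    have hxv : x ∈ T → x ∈ (v : Finset (Fin (2 * n - 1))) := fun h => by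
      rw [← hv] at h; exact (Finset.mem_inter.mp h).1
    rcases Finset.mem_union.mp (hsub hx) with h | h
    · have : x ∈ T := by rw [← hu]; exact Finset.mem_inter.mpr ⟨h, hx⟩
      exact Finset.disjoint_left.mp hdisj h (hxv this)
    · have : x ∈ T := by rw [← hv]; exact Finset.mem_inter.mpr ⟨h, hx⟩
      exact Finset.disjoint_left.mp hdisj (hxu this) h
  · -- W vertices not adjacent
    rintro w x hw hx ⟨⟨hne, hdisj⟩, hcompl⟩
    have hsub : S ⊆ (w : Finset (Fin (2 * n - 1))) ∪ x := by
      exact disjoint_compl_left_iff.mp hcompl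
    have hSTne : (S \ T).Nonempty ∨ T = S := by
      rcases Finset.eq_empty_or_nonempty (S \ T) with h | h
      · right
        exact Finset.eq_of_subset_of_card_le hTS (by
          have := Finset.card_sdiff_of_subset hTS
          rw [h] at this
          simp at this
          omega)
      · left; exact h
    -- In fact take any y ∈ S and derive contradiction as before
    have hSne : S.Nonempty := by rw [← Finset.card_pos, hScard]; exact hk
    obtain ⟨y, hy⟩ := hSne
    have hyw : y ∈ S \ T → y ∈ (w : Finset (Fin (2 * n - 1))) := fun h => by
      rw [← hw] at h; exact (Finset.mem_inter.mp h).1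
    have hyx : y ∈ S \ T → y ∈ (x : Finset (Fin (2 * n - 1))) := fun h => by
      rw [← hx] at h; exact (Finset.mem_inter.mp h).1
    rcases Finset.mem_union.mp (hsub hy) with h | h
    · have : y ∈ S \ T := by rw [← hw]; exact Finset.mem_inter.mpr ⟨h, hy⟩
      exact Finset.disjoint_left.mp hdisj h (hyx this)
    · have : y ∈ S \ T := by rw [← hx]; exact Finset.mem_inter.mpr ⟨h, hy⟩
      exact Finset.disjoint_left.mp hdisj (hyw this) h
  · -- neighbours of W lie in U
    rintro w u hw ⟨⟨hne, hdisj⟩, hcompl⟩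
    have hsub : S ⊆ (w : Finset (Fin (2 * n - 1))) ∪ u := by
      exact disjoint_compl_left_iff.mp hcompl
    ext x
    simp only [Finset.mem_inter]
    constructor
    · rintro ⟨hxu, hxS⟩
      have hxw : x ∉ (w : Finset (Fin (2 * n - 1))) :=
        fun h => Finset.disjoint_left.mp hdisj h hxu
      by_contra hxT
      have : x ∈ (w : Finset (Fin (2 * n - 1))) ∩ S := by
        rw [hw]; exact Finset.mem_sdiff.mpr ⟨hxS, hxT⟩
      exact hxw (Finset.mem_inter.mp this).1
    · intro hxT
      have hxS : x ∈ S := hTS hxT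
      have hxw : x ∉ (w : Finset (Fin (2 * n - 1))) := by
        intro h
        have : x ∈ S \ T := by rw [← hw]; exact Finset.mem_inter.mpr ⟨h, hxS⟩
        exact (Finset.mem_sdiff.mp this).2 hxT
      rcases Finset.mem_union.mp (hsub hxS) with h | h
      · exact absurd h hxw
      · exact ⟨h, hxS⟩
end

section
/- Let S = {2n−k,...,2n−1}, T_1, T_2 ⊆ S distinct with |T_1| = |T_2| = i and T_1 ≠ S − T_2. Then there is no path in O_n(S) from any vertex of U_{T_1} ∪ W_{T_1} to any vertex of U_{T_2} ∪ W_{T_2}; i.e., the induced subgraphs on these vertex sets lie in different connected components of O_n(S). -/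
open Finset

/-- Let `S = {2n−k,...,2n−1}`, and `T₁, T₂ ⊆ S` distinct with
`|T₁| = |T₂| = i` and `T₁ ≠ S − T₂`.  Then no vertex of `U_{T₁} ∪ W_{T₁}` is reachable in
`O_n(S)` from any vertex of `U_{T₂} ∪ W_{T₂}`: the induced subgraphs lie in different
connected components of `O_n(S)`. -/
theorem vertex_sets_disconnected (n k i : ℕ) (hk : 0 < k) (hkn : k < n)
    (T₁ T₂ : Finset (Fin (2 * n - 1)))
    (hT₁ : T₁ ⊆ lastColors n k) (hT₂ : T₂ ⊆ lastColors n k)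
    (hc₁ : T₁.card = i) (hc₂ : T₂.card = i) (hne : T₁ ≠ T₂)
    (hne' : T₁ ≠ lastColors n k \ T₂)
    (v w : {s : Finset (Fin (2 * n - 1)) // s.card = n - 1})
    (hv : (v : Finset (Fin (2 * n - 1))) ∩ lastColors n k = T₁ ∨
          (v : Finset (Fin (2 * n - 1))) ∩ lastColors n k = lastColors n k \ T₁)
    (hw : (w : Finset (Fin (2 * n - 1))) ∩ lastColors n k = T₂ ∨
          (w : Finset (Fin (2 * n - 1))) ∩ lastColors n k = lastColors n k \ T₂) :
    ¬ (oddGraphDel n (lastColors n k)).Reachable v w := by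
  set S := lastColors n k with hS
  -- edge lemma: adjacency flips the intersection with S to its complement in S
  have edge : ∀ u v : {s : Finset (Fin (2 * n - 1)) // s.card = n - 1},
      (oddGraphDel n S).Adj u v →
      (v : Finset (Fin (2 * n - 1))) ∩ S = S \ ((u : Finset (Fin (2 * n - 1))) ∩ S) := by
    intro u v h
    obtain ⟨⟨hne'', hdisj⟩, hcov⟩ := h
    have hsub : S ⊆ (u : Finset (Fin (2 * n - 1))) ∪ (v : Finset (Fin (2 * n - 1))) := by
      intro x hx
      by_contra hxn
      exact (Finset.disjoint_left.mp hcov (Finset.mem_compl.mpr hxn)) hx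
    ext x
    simp only [Finset.mem_inter, Finset.mem_sdiff]
    constructor
    · rintro ⟨hxv, hxS⟩
      refine ⟨hxS, fun ⟨hxu, _⟩ => ?_⟩
      exact (Finset.disjoint_left.mp hdisj hxu) hxv
    · rintro ⟨hxS, hxn⟩
      rcases Finset.mem_union.mp (hsub hxS) with h | h
      · exact absurd ⟨h, hxS⟩ hxn
      · exact ⟨h, hxS⟩
  -- invariant along walks
  have inv : ∀ a b : {s : Finset (Fin (2 * n - 1)) // s.card = n - 1},
      (oddGraphDel n S).Walk a b →
      (a : Finset (Fin (2 * n - 1))) ∩ S = (b : Finset (Fin (2 * n - 1))) ∩ S ∨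
      (a : Finset (Fin (2 * n - 1))) ∩ S = S \ ((b : Finset (Fin (2 * n - 1))) ∩ S) := by
    intro a b p
    induction p with
    | nil => exact Or.inl rfl
    | cons h p ih =>
      have hxy := edge _ _ h.symm
      rcases ih with h1 | h1
      · right; rw [hxy, h1]
      · left
        rw [hxy, h1]
        ext x
        simp only [Finset.mem_sdiff, Finset.mem_inter]
        tauto
  intro hr
  obtain ⟨p⟩ := hr
  have := inv v w p
  have hT₂S : S \ (S \ T₂) = T₂ := by
    rw [Finset.sdiff_sdiff_self_left, Finset.inter_eq_right.mpr hT₂]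
  have hT₁S : S \ (S \ T₁) = T₁ := by
    rw [Finset.sdiff_sdiff_self_left, Finset.inter_eq_right.mpr hT₁]
  -- case analysis
  rcases hv with hv | hv <;> rcases hw with hw | hw <;> rcases this with h | h <;>
    rw [hv, hw] at h
  · exact hne h
  · exact hne' h
  · exact hne' h
  · exact hne (h.trans hT₂S)
  · exact hne' (by rw [← hT₁S, h])
  · exact hne (by rw [← hT₁S, h, hT₂S])
  · exact hne (by rw [← hT₁S, h, hT₂S])
  · exact hne' (by rw [← hT₁S, h, hT₂S])
end

section
/- Let v and w be distinct vertices of the odd graph O_n and let a ≠ b be elements of [2n−1]. Then w = (a,b)·v (image of v under the transposition swapping a and b) if and only if there is a path of length two from v to w in O_n whose two edges carry labels a and b (in one of the two orders). -/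
open Finset

lemma mem_image_swap {m : ℕ} (v : Finset (Fin m)) (a b c : Fin m) :
    c ∈ v.image (Equiv.swap a b) ↔ Equiv.swap a b c ∈ v := by
  rw [Finset.mem_image]
  constructor
  · rintro ⟨d, hd, rfl⟩
    rwa [Equiv.swap_apply_self]
  · intro h
    exact ⟨_, h, Equiv.swap_apply_self _ _ _⟩

lemma bwd_aux {m : ℕ} {v x w : Finset (Fin m)} {a b : Fin m} (hab : a ≠ b)
    (hdvx : Disjoint v x) (hdxw : Disjoint x w)
    (h1 : (v ∪ x)ᶜ = {a}) (h2 : (x ∪ w)ᶜ = {b}) :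
    w = v.image (Equiv.swap a b) := by
  have ha : a ∉ v ∧ a ∉ x := by
    have : a ∈ (v ∪ x)ᶜ := h1 ▸ Finset.mem_singleton_self a
    simpa using this
  have hb : b ∉ x ∧ b ∉ w := by
    have : b ∈ (x ∪ w)ᶜ := h2 ▸ Finset.mem_singleton_self b
    simpa using this
  have hx : ∀ c, c ∈ x ↔ (c ≠ a ∧ c ∉ v) := by
    intro c
    constructor
    · intro hc
      exact ⟨fun h => ha.2 (h ▸ hc), fun hv => Finset.disjoint_left.mp hdvx hv hc⟩
    · rintro ⟨hca, hcv⟩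
      by_contra hcx
      have : c ∈ (v ∪ x)ᶜ := by simp [hcv, hcx]
      rw [h1] at this
      exact hca (Finset.mem_singleton.mp this)
  have hw : ∀ c, c ∈ w ↔ (c ≠ b ∧ c ∉ x) := by
    intro c
    constructor
    · intro hc
      exact ⟨fun h => hb.2 (h ▸ hc), fun hxc => Finset.disjoint_left.mp hdxw hxc hc⟩
    · rintro ⟨hcb, hcx⟩
      by_contra hcw
      have : c ∈ (x ∪ w)ᶜ := by simp [hcw, hcx]
      rw [h2] at this
      exact hcb (Finset.mem_singleton.mp this)
  have hbv : b ∈ v := by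
    have := hb.1
    rw [hx] at this
    push_neg at this
    exact this hab.symm
  ext c
  rw [mem_image_swap, hw c, hx c]
  push_neg
  by_cases hca : c = a
  · subst hca
    simp [Equiv.swap_apply_left, hab, hbv, ha.1]
  · by_cases hcb : c = b
    · subst hcb
      simp [Equiv.swap_apply_right, ha.1]
    · simp only [Equiv.swap_apply_of_ne_of_ne hca hcb]
      tauto

/-- **Biggs.** For distinct vertices `v, w` of the odd graph `O_n` and distinct
`a, b ∈ [2n−1]`, we have `w = (a,b)·v` iff there is a path of length two from `v` to `w`
whose edges carry the labels `a` and `b` in one of the two orders. -/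
theorem transposition_iff_two_path (n : ℕ) (hn : 1 ≤ n)
    (v w : {s : Finset (Fin (2 * n - 1)) // s.card = n - 1}) (hvw : v ≠ w)
    (a b : Fin (2 * n - 1)) (hab : a ≠ b) :
    (w : Finset (Fin (2 * n - 1))) = (v : Finset (Fin (2 * n - 1))).image (Equiv.swap a b) ↔
    ∃ x : {s : Finset (Fin (2 * n - 1)) // s.card = n - 1},
      (oddGraph n).Adj v x ∧ (oddGraph n).Adj x w ∧
      ((((v : Finset (Fin (2 * n - 1))) ∪ (x : Finset (Fin (2 * n - 1))))ᶜ = {a} ∧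
        ((x : Finset (Fin (2 * n - 1))) ∪ (w : Finset (Fin (2 * n - 1))))ᶜ = {b}) ∨
       (((v : Finset (Fin (2 * n - 1))) ∪ (x : Finset (Fin (2 * n - 1))))ᶜ = {b} ∧
        ((x : Finset (Fin (2 * n - 1))) ∪ (w : Finset (Fin (2 * n - 1))))ᶜ = {a})) := by
  have key : ∀ a b : Fin (2 * n - 1), a ≠ b → a ∈ (v : Finset (Fin (2 * n - 1))) →
      b ∉ (v : Finset (Fin (2 * n - 1))) →
      (w : Finset (Fin (2 * n - 1))) = (v : Finset (Fin (2 * n - 1))).image (Equiv.swap a b) →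
      ∃ x : {s : Finset (Fin (2 * n - 1)) // s.card = n - 1},
        (oddGraph n).Adj v x ∧ (oddGraph n).Adj x w ∧
        ((v : Finset (Fin (2 * n - 1))) ∪ (x : Finset (Fin (2 * n - 1))))ᶜ = {b} ∧
        ((x : Finset (Fin (2 * n - 1))) ∪ (w : Finset (Fin (2 * n - 1))))ᶜ = {a} := by
    intro a b hab ha hb hw
    have hwmem : ∀ c, c ∈ (w : Finset (Fin (2 * n - 1))) ↔
        Equiv.swap a b c ∈ (v : Finset (Fin (2 * n - 1))) := by
      intro c
      rw [hw, mem_image_swap]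
    set x0 : Finset (Fin (2 * n - 1)) := ((v : Finset (Fin (2 * n - 1))) ∪ {b})ᶜ with hx0
    have hcard : x0.card = n - 1 := by
      rw [Finset.card_compl, Finset.card_union_of_disjoint (by simp [hb]),
        Finset.card_singleton, v.2, Fintype.card_fin]
      omega
    have hax : a ∉ x0 := by simp [hx0, ha]
    have hbx : b ∉ x0 := by simp [hx0]
    have hmemx : ∀ c, c ∈ x0 ↔ (c ∉ (v : Finset (Fin (2 * n - 1))) ∧ c ≠ b) := by
      intro c
      simp [hx0, not_or]
      exact and_comm
    refine ⟨⟨x0, hcard⟩, ⟨?_, ?_⟩, ⟨?_, ?_⟩, ?_, ?_⟩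
    · intro h
      have hvx : (v : Finset (Fin (2 * n - 1))) = x0 := Subtype.ext_iff.mp h
      exact hax (hvx ▸ ha)
    · show Disjoint (v : Finset (Fin (2 * n - 1))) x0
      rw [Finset.disjoint_left]
      intro c hc hcx
      exact ((hmemx c).mp hcx).1 hc
    · intro h
      have hbw : b ∈ (w : Finset (Fin (2 * n - 1))) := by
        rw [hwmem]; simpa [Equiv.swap_apply_right] using ha
      have hwx : x0 = (w : Finset (Fin (2 * n - 1))) := Subtype.ext_iff.mp h
      exact hbx (hwx ▸ hbw)
    · show Disjoint x0 (w : Finset (Fin (2 * n - 1)))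
      rw [Finset.disjoint_left]
      intro c hcx hcw
      rw [hwmem] at hcw
      obtain ⟨hcv, hcb⟩ := (hmemx c).mp hcx
      rcases eq_or_ne c a with rfl | hca
      · exact hcv ha
      · rw [Equiv.swap_apply_of_ne_of_ne hca hcb] at hcw
        exact hcv hcw
    · show ((v : Finset (Fin (2 * n - 1))) ∪ x0)ᶜ = {b}
      ext c
      rw [Finset.mem_compl, Finset.mem_singleton, Finset.mem_union, not_or, hmemx c]
      constructor
      · rintro ⟨h1, h2⟩
        by_contra hcb
        exact h2 ⟨h1, hcb⟩
      · rintro rfl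
        exact ⟨hb, fun h => h.2 rfl⟩
    · show (x0 ∪ (w : Finset (Fin (2 * n - 1))))ᶜ = {a}
      ext c
      rw [Finset.mem_compl, Finset.mem_singleton, Finset.mem_union, not_or, hmemx c, hwmem c]
      constructor
      · rintro ⟨h1, h2⟩
        rcases eq_or_ne c a with rfl | hca
        · rfl
        · rcases eq_or_ne c b with rfl | hcb
          · rw [Equiv.swap_apply_right] at h2
            exact absurd ha h2
          · rw [Equiv.swap_apply_of_ne_of_ne hca hcb] at h2
            exact absurd ⟨h2, hcb⟩ h1
      · rintro rfl
        rw [Equiv.swap_apply_left]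
        exact ⟨fun h => h.1 ha, hb⟩
  constructor
  · intro hw
    by_cases hav : a ∈ (v : Finset (Fin (2 * n - 1)))
    · by_cases hbv : b ∈ (v : Finset (Fin (2 * n - 1)))
      · exfalso
        apply hvw
        apply Subtype.ext
        rw [hw]
        ext c
        rw [mem_image_swap]
        rcases eq_or_ne c a with rfl | hca
        · simp [Equiv.swap_apply_left, hav, hbv]
        · rcases eq_or_ne c b with rfl | hcb
          · simp [Equiv.swap_apply_right, hav, hbv]
          · rw [Equiv.swap_apply_of_ne_of_ne hca hcb]
      · obtain ⟨x, h1, h2, h3, h4⟩ := key a b hab hav hbv hw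
        exact ⟨x, h1, h2, Or.inr ⟨h3, h4⟩⟩
    · by_cases hbv : b ∈ (v : Finset (Fin (2 * n - 1)))
      · rw [Equiv.swap_comm] at hw
        obtain ⟨x, h1, h2, h3, h4⟩ := key b a hab.symm hbv hav hw
        exact ⟨x, h1, h2, Or.inl ⟨h3, h4⟩⟩
      · exfalso
        apply hvw
        apply Subtype.ext
        rw [hw]
        ext c
        rw [mem_image_swap]
        rcases eq_or_ne c a with rfl | hca
        · simp [Equiv.swap_apply_left, hav, hbv]
        · rcases eq_or_ne c b with rfl | hcb
          · simp [Equiv.swap_apply_right, hav, hbv]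
          · rw [Equiv.swap_apply_of_ne_of_ne hca hcb]
  · rintro ⟨x, hvx, hxw, h | h⟩
    · exact bwd_aux hab hvx.2 hxw.2 h.1 h.2
    · rw [Equiv.swap_comm]
      exact bwd_aux hab.symm hvx.2 hxw.2 h.1 h.2
end

section
/- For vertices v, w of the odd graph O_n, the graph distance satisfies: d(v,w) = 2r if and only if |v ∩ w| = n − 1 − r, and d(v,w) = 2r+1 if and only if |v ∩ w| = r. Consequently the diameter of O_n is n − 1. -/
open Finset

section OddGraphAux

variable {n : ℕ}

/-- Vertex type of the odd graph. -/
abbrev OGV (n : ℕ) := {s : Finset (Fin (2 * n - 1)) // s.card = n - 1}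

lemma og_adj_iff {u v : OGV n} :
    (oddGraph n).Adj u v ↔ u ≠ v ∧ Disjoint (u : Finset (Fin (2 * n - 1))) (v : Finset (Fin (2 * n - 1))) :=
  Iff.rfl

lemma og_inter_le (v w : OGV n) : ((v : Finset (Fin (2*n-1))) ∩ (w : Finset (Fin (2*n-1)))).card ≤ n - 1 := by
  calc ((v : Finset (Fin (2*n-1))) ∩ w).card ≤ (v : Finset (Fin (2*n-1))).card :=
        card_le_card (inter_subset_left)
    _ = n - 1 := v.2

lemma og_compl_card (hn : 1 ≤ n) (v : OGV n) :
    ((v : Finset (Fin (2*n-1)))ᶜ).card = n := by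
  rw [card_compl, v.2, Fintype.card_fin]; omega

/-- Along an edge, intersection cardinalities with a fixed `w` sum to `n-1` or `n-2`. -/
lemma og_edge_card (hn : 1 ≤ n) {u v : OGV n} (h : (oddGraph n).Adj u v) (w : OGV n) :
    ((u:Finset (Fin (2*n-1))) ∩ w).card + ((v:Finset (Fin (2*n-1))) ∩ w).card ≤ n - 1 ∧
    n - 1 ≤ ((u:Finset (Fin (2*n-1))) ∩ w).card + ((v:Finset (Fin (2*n-1))) ∩ w).card + 1 := by
  obtain ⟨hne, hdisj⟩ := h
  have hdisj' : Disjoint ((u:Finset (Fin (2*n-1))) ∩ w) ((v:Finset (Fin (2*n-1))) ∩ w) :=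
    hdisj.mono inter_subset_left inter_subset_left
  have hunion : ((u:Finset (Fin (2*n-1))) ∩ w) ∪ ((v:Finset (Fin (2*n-1))) ∩ w)
      = ((u:Finset (Fin (2*n-1))) ∪ v) ∩ w := (union_inter_distrib_right _ _ _).symm
  have hcard : (((u:Finset (Fin (2*n-1))) ∪ v) ∩ w).card
      = ((u:Finset (Fin (2*n-1))) ∩ w).card + ((v:Finset (Fin (2*n-1))) ∩ w).card := by
    rw [← hunion, card_union_of_disjoint hdisj']
  have huv : ((u:Finset (Fin (2*n-1))) ∪ v).card = 2 * (n - 1) := by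
    rw [card_union_of_disjoint hdisj, u.2, v.2]; omega
  constructor
  · rw [← hcard]
    calc (((u:Finset (Fin (2*n-1))) ∪ v) ∩ w).card ≤ (w : Finset (Fin (2*n-1))).card :=
          card_le_card inter_subset_right
      _ = n - 1 := w.2
  · have h1 : ((w:Finset (Fin (2*n-1))) \ ((u:Finset (Fin (2*n-1))) ∪ v)).card
        ≤ (((u:Finset (Fin (2*n-1))) ∪ v)ᶜ).card :=
      card_le_card (fun x hx => by
        simp only [mem_sdiff] at hx
        simpa using hx.2)
    have h2 : (((u:Finset (Fin (2*n-1))) ∪ v)ᶜ).card = 1 := by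
      rw [card_compl, huv, Fintype.card_fin]; omega
    have h3 : (((u:Finset (Fin (2*n-1))) ∪ v) ∩ w).card
        + ((w:Finset (Fin (2*n-1))) \ ((u:Finset (Fin (2*n-1))) ∪ v)).card
        = (w : Finset (Fin (2*n-1))).card := by
      rw [inter_comm]
      exact card_inter_add_card_sdiff _ _
    rw [w.2] at h3
    omega

/-- Lower bound: any walk has length at least `min (2(m-t)) (2t+1)`. -/
lemma og_walk_lower (hn : 1 ≤ n) {v w : OGV n} (p : (oddGraph n).Walk v w) :
    min (2 * ((n-1) - ((v:Finset (Fin (2*n-1))) ∩ w).card))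
      (2 * ((v:Finset (Fin (2*n-1))) ∩ w).card + 1) ≤ p.length := by
  induction p with
  | nil =>
    rename_i a
    have : ((a:Finset (Fin (2*n-1))) ∩ a).card = n - 1 := by rw [inter_self]; exact a.2
    simp only [SimpleGraph.Walk.length_nil]
    omega
  | @cons a b c h q ih =>
    have hedge := og_edge_card hn h c
    have h1 := og_inter_le a c
    have h2 := og_inter_le b c
    simp only [SimpleGraph.Walk.length_cons]
    omega

/-- Upper bound (even): if `m ≤ t + r` there is a walk of length `≤ 2r`. -/
lemma og_walk_upper_even (hn : 1 ≤ n) :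
    ∀ r : ℕ, ∀ v w : OGV n, n - 1 ≤ ((v:Finset (Fin (2*n-1))) ∩ w).card + r →
    ∃ p : (oddGraph n).Walk v w, p.length ≤ 2 * r := by
  intro r
  induction r with
  | zero =>
    intro v w hvw
    have ht : ((v:Finset (Fin (2*n-1))) ∩ w).card = n - 1 := le_antisymm (og_inter_le v w) (by omega)
    have hsub : (v:Finset (Fin (2*n-1))) ∩ w = v := by
      apply eq_of_subset_of_card_le inter_subset_left
      rw [ht, v.2]
    have hveq : (v:Finset (Fin (2*n-1))) = w := by
      apply eq_of_subset_of_card_le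
      · rw [← hsub]; exact inter_subset_right
      · rw [v.2, w.2]
    obtain rfl : v = w := Subtype.ext hveq
    exact ⟨SimpleGraph.Walk.nil, by simp⟩
  | succ r ih =>
    intro v w hvw
    by_cases hc : n - 1 ≤ ((v:Finset (Fin (2*n-1))) ∩ w).card + r
    · obtain ⟨p, hp⟩ := ih v w hc
      exact ⟨p, by omega⟩
    push_neg at hc
    set t := ((v:Finset (Fin (2*n-1))) ∩ w).card with ht
    have htlt : t < n - 1 := by omega
    have hn2 : 2 ≤ n := by omega
    -- pick x ∈ w \ v
    have hwv : ((w:Finset (Fin (2*n-1))) \ v).card = (n-1) - t := by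
      have := card_inter_add_card_sdiff (w:Finset (Fin (2*n-1))) (v:Finset (Fin (2*n-1)))
      rw [w.2, inter_comm] at this
      omega
    have hwvne : ((w:Finset (Fin (2*n-1))) \ v).Nonempty := by
      rw [← card_pos, hwv]; omega
    obtain ⟨x, hx⟩ := hwvne
    rw [mem_sdiff] at hx
    have hxvc : x ∈ ((v:Finset (Fin (2*n-1)))ᶜ) := by simpa using hx.2
    -- u1 := vᶜ \ {x}
    have hu1card : (((v:Finset (Fin (2*n-1)))ᶜ) \ {x}).card = n - 1 := by
      rw [card_sdiff_of_subset (by simpa using hxvc), og_compl_card hn v, card_singleton]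
    set u1 : OGV n := ⟨((v:Finset (Fin (2*n-1)))ᶜ) \ {x}, hu1card⟩ with hu1
    -- S ⊆ v \ w with card (n-1) - t - 1
    have hvw' : ((v:Finset (Fin (2*n-1))) \ w).card = (n-1) - t := by
      have := card_inter_add_card_sdiff (v:Finset (Fin (2*n-1))) (w:Finset (Fin (2*n-1)))
      rw [v.2] at this
      omega
    obtain ⟨S, hSsub, hScard⟩ :=
      exists_subset_card_eq (s := (v:Finset (Fin (2*n-1))) \ w) (n := (n-1) - t - 1) (by omega)
    -- u2 := (w ∩ v) ∪ {x} ∪ S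
    have hxnv : x ∉ ((w:Finset (Fin (2*n-1))) ∩ v ∪ S) := by
      intro hmem
      rcases mem_union.mp hmem with hm | hm
      · exact hx.2 (mem_inter.mp hm).2
      · exact hx.2 (mem_sdiff.mp (hSsub hm)).1
    have hdisjS : Disjoint ((w:Finset (Fin (2*n-1))) ∩ v) S := by
      apply Finset.disjoint_left.mpr
      intro a ha haS
      exact (mem_sdiff.mp (hSsub haS)).2 (mem_inter.mp ha).1
    have hu2card : (((w:Finset (Fin (2*n-1))) ∩ v ∪ S) ∪ {x}).card = n - 1 := by
      rw [card_union_of_disjoint (by simpa using hxnv),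
        card_union_of_disjoint hdisjS, card_singleton, inter_comm, hScard, ← ht]
      omega
    set u2 : OGV n := ⟨((w:Finset (Fin (2*n-1))) ∩ v ∪ S) ∪ {x}, hu2card⟩ with hu2
    -- adjacency v ~ u1
    have hd1 : Disjoint (v:Finset (Fin (2*n-1))) (u1:Finset (Fin (2*n-1))) := by
      apply Finset.disjoint_left.mpr
      intro a ha hau1
      have := (mem_sdiff.mp hau1).1
      simp only [mem_compl] at this
      exact this ha
    have hadj1 : (oddGraph n).Adj v u1 := by
      refine ⟨fun heq => ?_, hd1⟩
      have : (v:Finset (Fin (2*n-1))) = (u1:Finset (Fin (2*n-1))) := congrArg _ heq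
      rw [this, disjoint_self] at hd1
      have hc0 : (u1 : Finset (Fin (2*n-1))).card = 0 := by rw [hd1]; simp
      have := u1.2
      omega
    -- adjacency u1 ~ u2
    have hd2 : Disjoint (u1:Finset (Fin (2*n-1))) (u2:Finset (Fin (2*n-1))) := by
      apply Finset.disjoint_left.mpr
      intro a hau1 hau2
      have ha1 := mem_sdiff.mp hau1
      have havc := mem_compl.mp ha1.1
      rcases mem_union.mp hau2 with hm | hm
      · rcases mem_union.mp hm with hm' | hm'
        · exact havc (mem_inter.mp hm').2
        · exact havc (mem_sdiff.mp (hSsub hm')).1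
      · exact ha1.2 hm
    have hadj2 : (oddGraph n).Adj u1 u2 := by
      refine ⟨fun heq => ?_, hd2⟩
      have hxu2 : x ∈ (u2:Finset (Fin (2*n-1))) := by
        simp [hu2]
      have hxu1 : x ∉ (u1:Finset (Fin (2*n-1))) := by
        simp [hu1]
      rw [heq] at hxu1
      exact hxu1 hxu2
    -- intersection of u2 with w has card t + 1
    have hu2w : ((u2:Finset (Fin (2*n-1))) ∩ w).card = t + 1 := by
      have hSw : ∀ a, a ∈ S → a ∉ (w:Finset (Fin (2*n-1))) :=
        fun a ha => (mem_sdiff.mp (hSsub ha)).2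
      have heq : (u2:Finset (Fin (2*n-1))) ∩ w = ((w:Finset (Fin (2*n-1))) ∩ v) ∪ {x} := by
        ext a
        simp only [hu2, mem_inter, mem_union, mem_singleton]
        constructor
        · rintro ⟨(hm | hm) | rfl, haw⟩
          · exact Or.inl hm
          · exact absurd haw (hSw a hm)
          · exact Or.inr rfl
        · rintro (hm | rfl)
          · exact ⟨Or.inl (Or.inl hm), hm.1⟩
          · exact ⟨Or.inr rfl, hx.1⟩
      have hdx : Disjoint ((w:Finset (Fin (2*n-1))) ∩ v) {x} :=
        disjoint_singleton_right.mpr (fun hm => hx.2 (mem_inter.mp hm).2)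
      rw [heq, card_union_of_disjoint hdx, card_singleton, inter_comm, ← ht]
    obtain ⟨p, hp⟩ := ih u2 w (by rw [hu2w]; omega)
    refine ⟨SimpleGraph.Walk.cons hadj1 (SimpleGraph.Walk.cons hadj2 p), ?_⟩
    simp only [SimpleGraph.Walk.length_cons]
    omega

/-- Upper bound (odd): there is a walk of length `≤ 2t + 1`. -/
lemma og_walk_upper_odd (hn : 1 ≤ n) (v w : OGV n) :
    ∃ p : (oddGraph n).Walk v w, p.length ≤ 2 * ((v:Finset (Fin (2*n-1))) ∩ w).card + 1 := by
  set t := ((v:Finset (Fin (2*n-1))) ∩ w).card with ht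
  by_cases hm : n - 1 = 0
  · have hveq : (v:Finset (Fin (2*n-1))) = w := by
      have hv0 : (v:Finset (Fin (2*n-1))) = ∅ := card_eq_zero.mp (by rw [v.2]; exact hm)
      have hw0 : (w:Finset (Fin (2*n-1))) = ∅ := card_eq_zero.mp (by rw [w.2]; exact hm)
      rw [hv0, hw0]
    obtain rfl : v = w := Subtype.ext hveq
    exact ⟨SimpleGraph.Walk.nil, by simp⟩
  have hm1 : 1 ≤ n - 1 := by omega
  -- choose u with v \ w ⊆ u ⊆ wᶜ, |u| = n - 1
  have hvw' : ((v:Finset (Fin (2*n-1))) \ w).card = (n-1) - t := by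
    have := card_inter_add_card_sdiff (v:Finset (Fin (2*n-1))) (w:Finset (Fin (2*n-1)))
    rw [v.2] at this
    omega
  have hsub : (v:Finset (Fin (2*n-1))) \ w ⊆ ((w:Finset (Fin (2*n-1)))ᶜ) := by
    intro a ha
    simpa using (mem_sdiff.mp ha).2
  have htle : t ≤ n - 1 := og_inter_le v w
  obtain ⟨u0, hu0sub, hu0sub2, hu0card⟩ :=
    exists_subsuperset_card_eq (n := t + ((v:Finset (Fin (2*n-1))) \ w).card) hsub
      (Nat.le_add_left _ _) (by rw [hvw', og_compl_card hn w]; omega)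
  rw [hvw'] at hu0card
  have hu0card' : u0.card = n - 1 := by rw [hu0card]; omega
  set u : OGV n := ⟨u0, hu0card'⟩ with hu
  -- walk from v to u of length ≤ 2t
  have hvu : n - 1 ≤ ((v:Finset (Fin (2*n-1))) ∩ u).card + t := by
    have : (v:Finset (Fin (2*n-1))) \ w ⊆ (v:Finset (Fin (2*n-1))) ∩ u := by
      intro a ha
      exact mem_inter.mpr ⟨(mem_sdiff.mp ha).1, hu0sub ha⟩
    have hle := card_le_card this
    rw [hvw'] at hle
    omega
  obtain ⟨p, hp⟩ := og_walk_upper_even hn t v u hvu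
  -- edge u ~ w
  have hduw : Disjoint (u:Finset (Fin (2*n-1))) (w:Finset (Fin (2*n-1))) := by
    apply Finset.disjoint_left.mpr
    intro a hau haw
    exact (mem_compl.mp (hu0sub2 hau)) haw
  have hadj : (oddGraph n).Adj u w := by
    refine ⟨fun heq => ?_, hduw⟩
    have : (u:Finset (Fin (2*n-1))) = (w:Finset (Fin (2*n-1))) := congrArg _ heq
    rw [this, disjoint_self] at hduw
    have hc0 : (w : Finset (Fin (2*n-1))).card = 0 := by rw [hduw]; simp
    have := w.2
    omega
  exact ⟨p.concat hadj, by rw [SimpleGraph.Walk.length_concat]; omega⟩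

/-- The exact distance formula in the odd graph. -/
lemma og_dist_formula (hn : 1 ≤ n) (v w : OGV n) :
    (oddGraph n).dist v w = min (2 * ((n-1) - ((v:Finset (Fin (2*n-1))) ∩ w).card))
      (2 * ((v:Finset (Fin (2*n-1))) ∩ w).card + 1) := by
  set t := ((v:Finset (Fin (2*n-1))) ∩ w).card with ht
  have htle : t ≤ n - 1 := og_inter_le v w
  obtain ⟨p, hp⟩ := og_walk_upper_even hn ((n-1) - t) v w (by omega)
  obtain ⟨q, hq⟩ := og_walk_upper_odd hn v w
  have h1 := SimpleGraph.dist_le p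
  have h2 := SimpleGraph.dist_le q
  have hreach : (oddGraph n).Reachable v w := ⟨p⟩
  obtain ⟨r, hr⟩ := hreach.exists_walk_length_eq_dist
  have h3 := og_walk_lower hn r
  omega

lemma og_exists_inter_card (hn : 1 ≤ n) (t : ℕ) (ht : t ≤ n - 1) :
    ∃ v w : OGV n, ((v:Finset (Fin (2*n-1))) ∩ w).card = t := by
  set m := n - 1 with hm
  have hb1 : ∀ a ∈ Finset.range m, a < 2 * n - 1 := fun a ha => by
    have := Finset.mem_range.mp ha; omega
  have hb2 : ∀ a ∈ Finset.Ico (m - t) (2 * m - t), a < 2 * n - 1 := fun a ha => by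
    have := (Finset.mem_Ico.mp ha).2; omega
  have hv : (Finset.attachFin (Finset.range m) hb1).card = n - 1 := by
    rw [Finset.card_attachFin, Finset.card_range]
  have hw : (Finset.attachFin (Finset.Ico (m - t) (2 * m - t)) hb2).card = n - 1 := by
    rw [Finset.card_attachFin, Nat.card_Ico]; omega
  refine ⟨⟨_, hv⟩, ⟨_, hw⟩, ?_⟩
  have hinter : (Finset.attachFin (Finset.range m) hb1) ∩ (Finset.attachFin (Finset.Ico (m - t) (2 * m - t)) hb2)
      = Finset.attachFin (Finset.Ico (m - t) m) (fun a ha => by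
          have := (Finset.mem_Ico.mp ha).2; omega) := by
    ext a
    simp only [mem_inter, Finset.mem_attachFin, Finset.mem_range, Finset.mem_Ico]
    omega
  show ((Finset.attachFin (Finset.range m) hb1) ∩ (Finset.attachFin (Finset.Ico (m - t) (2 * m - t)) hb2)).card = t
  rw [hinter, Finset.card_attachFin, Nat.card_Ico]
  omega

end OddGraphAux

/-- **Biggs.** In the odd graph `O_n`, `d(v,w) = 2r` iff `|v ∩ w| = n−1−r`
(for `2r ≤ n−1`) and `d(v,w) = 2r+1` iff `|v ∩ w| = r` (for `2r+1 ≤ n−1`).  Consequently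
the diameter of `O_n` is `n−1`. -/
theorem oddGraph_dist (n : ℕ) (hn : 1 ≤ n) :
    (∀ (v w : {s : Finset (Fin (2 * n - 1)) // s.card = n - 1}) (r : ℕ),
      (2 * r ≤ n - 1 →
        ((oddGraph n).dist v w = 2 * r ↔
          ((v : Finset (Fin (2 * n - 1))) ∩ (w : Finset (Fin (2 * n - 1)))).card = n - 1 - r)) ∧
      (2 * r + 1 ≤ n - 1 →
        ((oddGraph n).dist v w = 2 * r + 1 ↔
          ((v : Finset (Fin (2 * n - 1))) ∩ (w : Finset (Fin (2 * n - 1)))).card = r))) ∧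
    (∀ v w : {s : Finset (Fin (2 * n - 1)) // s.card = n - 1}, (oddGraph n).dist v w ≤ n - 1) ∧
    (∃ v w : {s : Finset (Fin (2 * n - 1)) // s.card = n - 1}, (oddGraph n).dist v w = n - 1) := by
  refine ⟨?_, ?_, ?_⟩
  · intro v w r
    have hform := og_dist_formula hn v w
    have htle := og_inter_le v w
    constructor
    · intro hr
      constructor
      · intro hd; omega
      · intro hcard; omega
    · intro hr
      constructor
      · intro hd; omega
      · intro hcard; omega
  · intro v w
    have hform := og_dist_formula hn v w
    have htle := og_inter_le v w
    omega
  · obtain ⟨v, w, hvw⟩ := og_exists_inter_card hn ((n - 1) / 2) (by omega)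
    refine ⟨v, w, ?_⟩
    have hform := og_dist_formula hn v w
    omega
end

section
/- Suppose n ≥ 4 and a 3-regular subgraph of the odd graph O_n is obtained by deleting an independent set of vertices that is a union of k orbits under the cyclic permutation (1,2,...,2n−1), each orbit having 2n−1 vertices, each deleted vertex having degree n. Then counting edges forces k = (4/(2n−4))·binom(2n−4, n). Equivalently, (n−3)/((2n−1)(2n−3)) · binom(2n−1, n−1) = (4/(2n−4))·binom(2n−4, n). -/
lemma key_id (m : ℕ) :
    (((4:ℚ)+m) - 3) / ((2*((4:ℚ)+m) - 1) * (2*((4:ℚ)+m) - 3)) * (Nat.choose (2*m+7) (m+3) : ℚ)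
      = 4 / (2*((4:ℚ)+m) - 4) * (Nat.choose (2*m+4) (m+4) : ℚ) := by
  rw [Nat.cast_choose ℚ (by omega : m+3 ≤ 2*m+7), Nat.cast_choose ℚ (by omega : m+4 ≤ 2*m+4)]
  have e1 : 2*m+7 - (m+3) = m+4 := by omega
  have e2 : 2*m+4 - (m+4) = m := by omega
  rw [e1, e2]
  have f1 : ((2*m+7).factorial : ℚ) = (2*m+7) * ((2*m+6) * ((2*m+5) * (2*m+4).factorial)) := by
    have : 2*m+7 = (2*m+4)+1+1+1 := by omega
    rw [this]; push_cast [Nat.factorial_succ]; ring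
  have f2 : ((m+3).factorial : ℚ) = (m+3) * ((m+2) * ((m+1) * m.factorial)) := by
    have : m+3 = m+1+1+1 := by omega
    rw [this]; push_cast [Nat.factorial_succ]; ring
  rw [f1, f2]
  have hm : (0:ℚ) ≤ m := by positivity
  have h0 : ((m.factorial:ℚ)) ≠ 0 := by exact_mod_cast (Nat.factorial_pos m).ne'
  have h1 : (((m+4).factorial:ℚ)) ≠ 0 := by exact_mod_cast (Nat.factorial_pos (m+4)).ne'
  have h2 : (((2*m+4).factorial:ℚ)) ≠ 0 := by exact_mod_cast (Nat.factorial_pos (2*m+4)).ne'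
  have n1 : (m:ℚ)+3 ≠ 0 := by positivity
  have n2 : (m:ℚ)+2 ≠ 0 := by positivity
  have n3 : (m:ℚ)+1 ≠ 0 := by positivity
  have d1 : (2*((4:ℚ)+m) - 1) ≠ 0 := by nlinarith
  have d2 : (2*((4:ℚ)+m) - 3) ≠ 0 := by nlinarith
  have d3 : (2*((4:ℚ)+m) - 4) ≠ 0 := by nlinarith
  field_simp
  rw [div_eq_div_iff (mul_ne_zero (by nlinarith) (by nlinarith)) (by nlinarith)]
  ring

/-- Suppose `n ≥ 4` and a 3-regular subgraph of the odd graph `O_n` is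
obtained by deleting an independent set which is a union of `k` orbits under the cyclic
permutation `(1,...,2n−1)` (so `(2n−1)k` vertices, each of degree `n`, are removed together
with `n(2n−1)k` edges).  Counting edges (the remaining graph has `C(2n−1,n−1) − k(2n−1)`
vertices, hence `(3/2)(C(2n−1,n−1) − k(2n−1))` edges, while `O_n` has `(n/2)·C(2n−1,n−1)`
edges), this forces `k = (4/(2n−4))·C(2n−4, n)`, the fourth convolution of the Catalan
numbers; equivalently `((n−3)/((2n−1)(2n−3)))·C(2n−1,n−1) = (4/(2n−4))·C(2n−4,n)`. -/
theorem fourth_catalan_convolution (n : ℕ) (hn : 4 ≤ n) :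
    (∀ k : ℚ,
      (3 / 2) * ((Nat.choose (2 * n - 1) (n - 1) : ℚ) - k * (2 * n - 1)) =
        (n / 2) * (Nat.choose (2 * n - 1) (n - 1) : ℚ) - n * k * (2 * n - 1) →
      k = (4 / (2 * (n : ℚ) - 4)) * (Nat.choose (2 * n - 4) n : ℚ)) ∧
    (((n : ℚ) - 3) / ((2 * n - 1) * (2 * n - 3)) * (Nat.choose (2 * n - 1) (n - 1) : ℚ) =
      (4 / (2 * (n : ℚ) - 4)) * (Nat.choose (2 * n - 4) n : ℚ)) := by
  obtain ⟨m, rfl⟩ := Nat.exists_eq_add_of_le hn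
  have a1 : 2 * (4 + m) - 1 = 2*m+7 := by omega
  have a2 : (4 + m) - 1 = m+3 := by omega
  have a3 : 2 * (4 + m) - 4 = 2*m+4 := by omega
  have a4 : 4 + m = m+4 := by omega
  rw [a1, a2, a3]
  have key := key_id m
  have hm : (0:ℚ) ≤ m := by positivity
  have d1 : (2*((4:ℚ)+m) - 1) ≠ 0 := by nlinarith
  have d2 : (2*((4:ℚ)+m) - 3) ≠ 0 := by nlinarith
  constructor
  · intro k h
    push_cast at h ⊢
    rw [a4]
    rw [← key]
    rw [div_mul_eq_mul_div, eq_div_iff (mul_ne_zero d1 d2)]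
    linear_combination 2 * h
  · push_cast
    rw [a4]
    exact key
end
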